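/- Let ℓ be a prime, m ≥ 1, and let M be a 2×2 matrix over ZMod ℓ^m that is conjugate by an invertible matrix over ZMod ℓ^m to the diagonal matrix diag(λ, μ), where λ, μ ∈ ZMod ℓ^m and λ − μ is a unit of ZMod ℓ^m. Then there are exactly two cyclic subgroups H of (ZMod ℓ^m)² of order exactly ℓ^m that are M-invariant (i.e., M·h ∈ H for all h ∈ H). -/

import Mathlib

/-- Let `ℓ` be a prime, `m ≥ 1`, and `M` a `2×2` matrix over `ZMod ℓ^m` that is conjugate by
an invertible matrix over `ZMod ℓ^m` to `diag(λ, μ)` where `λ − μ` is a unit of `ZMod ℓ^m`.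
Then there are exactly two cyclic subgroups `H` of `(ZMod ℓ^m)²` of order exactly `ℓ^m` that
are `M`-invariant. -/
theorem stmt_11 (ℓ m : ℕ) (hℓ : ℓ.Prime) (hm : 1 ≤ m)
    (M : Matrix (Fin 2) (Fin 2) (ZMod (ℓ ^ m))) (lam mu : ZMod (ℓ ^ m))
    (hunit : IsUnit (lam - mu))
    (hconj : ∃ P : (Matrix (Fin 2) (Fin 2) (ZMod (ℓ ^ m)))ˣ,
      M = (P : Matrix (Fin 2) (Fin 2) (ZMod (ℓ ^ m))) * Matrix.diagonal ![lam, mu] *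
        ((P⁻¹ : _ˣ) : Matrix (Fin 2) (Fin 2) (ZMod (ℓ ^ m)))) :
    Nat.card {H : AddSubgroup (Fin 2 → ZMod (ℓ ^ m)) //
        (∃ x : Fin 2 → ZMod (ℓ ^ m), addOrderOf x = ℓ ^ m ∧ H = AddSubgroup.zmultiples x) ∧
        ∀ h ∈ H, M.mulVec h ∈ H} = 2 := by
  obtain ⟨P, rfl⟩ := hconj
  have hm' : m ≠ 0 := by omega
  haveI : NeZero (ℓ ^ m) := ⟨pow_ne_zero m hℓ.pos.ne'⟩
  haveI : Fact (1 < ℓ ^ m) := ⟨Nat.one_lt_pow hm' hℓ.one_lt⟩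
  set A : Matrix (Fin 2) (Fin 2) (ZMod (ℓ ^ m)) :=
    (P : Matrix (Fin 2) (Fin 2) (ZMod (ℓ ^ m))) with hA
  set B : Matrix (Fin 2) (Fin 2) (ZMod (ℓ ^ m)) :=
    ((P⁻¹ : _ˣ) : Matrix (Fin 2) (Fin 2) (ZMod (ℓ ^ m))) with hB
  set D : Matrix (Fin 2) (Fin 2) (ZMod (ℓ ^ m)) := Matrix.diagonal ![lam, mu] with hD
  have hBA : B * A = 1 := P.inv_mul
  have hAB : A * B = 1 := P.mul_inv
  have hBAv : ∀ v : Fin 2 → ZMod (ℓ ^ m), B.mulVec (A.mulVec v) = v := by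
    intro v; rw [Matrix.mulVec_mulVec, hBA, Matrix.one_mulVec]
  have hABv : ∀ v : Fin 2 → ZMod (ℓ ^ m), A.mulVec (B.mulVec v) = v := by
    intro v; rw [Matrix.mulVec_mulVec, hAB, Matrix.one_mulVec]
  have hvalcast : ∀ r : ZMod (ℓ ^ m), ((r.val : ℕ) : ZMod (ℓ ^ m)) = r := by
    intro r; rw [ZMod.natCast_val, ZMod.cast_id]
  -- scalar multiples lie in zmultiples
  have key : ∀ (r : ZMod (ℓ ^ m)) (v : Fin 2 → ZMod (ℓ ^ m)),
      r • v ∈ AddSubgroup.zmultiples v := by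
    intro r v
    refine AddSubgroup.mem_zmultiples_iff.mpr ⟨(r.val : ℤ), ?_⟩
    rw [← Int.cast_smul_eq_zsmul (ZMod (ℓ ^ m))]
    push_cast
    rw [hvalcast]
  -- order lemma: unit coordinate gives full order
  have horder : ∀ (x : Fin 2 → ZMod (ℓ ^ m)) (i : Fin 2),
      IsUnit (x i) → addOrderOf x = ℓ ^ m := by
    intro x i hi
    refine Nat.dvd_antisymm ?_ ?_
    · apply addOrderOf_dvd_of_nsmul_eq_zero
      funext j
      show (ℓ ^ m) • x j = 0
      rw [nsmul_eq_mul, ZMod.natCast_self, zero_mul]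
    · have h0 := congrFun (addOrderOf_nsmul_eq_zero x) i
      have h1 : ((addOrderOf x : ℕ) : ZMod (ℓ ^ m)) * x i = 0 := by
        rw [← nsmul_eq_mul]; exact h0
      have h2 : ((addOrderOf x : ℕ) : ZMod (ℓ ^ m)) = 0 := by
        obtain ⟨u, hu⟩ := hi
        have h3 := congrArg (· * (↑u⁻¹ : ZMod (ℓ ^ m))) h1
        simpa [← hu, mul_assoc, u.mul_inv] using h3
      exact (ZMod.natCast_eq_zero_iff _ _).mp h2
  -- full order forces a unit coordinate
  have hcoord : ∀ x : Fin 2 → ZMod (ℓ ^ m), addOrderOf x = ℓ ^ m →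
      IsUnit (x 0) ∨ IsUnit (x 1) := by
    intro x hx
    by_contra hcon
    push_neg at hcon
    have hsm : ∀ i : Fin 2, ((ℓ ^ (m - 1) : ℕ) : ZMod (ℓ ^ m)) * x i = 0 := by
      intro i
      have hni : ¬ IsUnit (x i) := by fin_cases i <;> [exact hcon.1; exact hcon.2]
      have hdvd : ℓ ∣ (x i).val := by
        by_contra hnd
        refine hni ?_
        have := (ZMod.isUnit_iff_coprime (x i).val (ℓ ^ m)).mpr
          (Nat.Coprime.pow_right _ ((Nat.coprime_comm.mp (hℓ.coprime_iff_not_dvd.mpr hnd))))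
        rwa [hvalcast] at this
      obtain ⟨t, ht⟩ := hdvd
      have hxi : x i = ((ℓ * t : ℕ) : ZMod (ℓ ^ m)) := by rw [← ht, hvalcast]
      have hnat : ℓ ^ (m - 1) * (ℓ * t) = ℓ ^ m * t := by
        rw [← mul_assoc, ← pow_succ, Nat.sub_add_cancel hm]
      calc ((ℓ ^ (m - 1) : ℕ) : ZMod (ℓ ^ m)) * x i
          = ((ℓ ^ (m - 1) * (ℓ * t) : ℕ) : ZMod (ℓ ^ m)) := by rw [hxi]; push_cast; ring
        _ = 0 := by rw [hnat, Nat.cast_mul, ZMod.natCast_self, zero_mul]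
    have hzero : (ℓ ^ (m - 1)) • x = 0 := by
      funext j
      show (ℓ ^ (m - 1)) • x j = 0
      rw [nsmul_eq_mul]
      push_cast
      have := hsm j
      push_cast at this
      exact this
    have hdvd : addOrderOf x ∣ ℓ ^ (m - 1) := addOrderOf_dvd_of_nsmul_eq_zero hzero
    rw [hx] at hdvd
    have hle : ℓ ^ m ≤ ℓ ^ (m - 1) := Nat.le_of_dvd (pow_pos hℓ.pos _) hdvd
    have hlt : ℓ ^ (m - 1) < ℓ ^ m := Nat.pow_lt_pow_right hℓ.one_lt (by omega)
    omega
  -- mulVec by an invertible matrix preserves order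
  have horder_map : ∀ (C C' : Matrix (Fin 2) (Fin 2) (ZMod (ℓ ^ m))), C' * C = 1 →
      ∀ x : Fin 2 → ZMod (ℓ ^ m), addOrderOf (C.mulVec x) = addOrderOf x := by
    intro C C' hCC x
    refine addOrderOf_injective (Matrix.mulVecLin C).toAddMonoidHom ?_ x
    intro a b hab
    have := congrArg (C'.mulVec) hab
    simp only [LinearMap.toAddMonoidHom_coe, Matrix.mulVecLin_apply] at this
    rwa [Matrix.mulVec_mulVec, Matrix.mulVec_mulVec, hCC, Matrix.one_mulVec, Matrix.one_mulVec] at this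
  -- unit scaling does not change zmultiples
  have hzm : ∀ (u : (ZMod (ℓ ^ m))ˣ) (v : Fin 2 → ZMod (ℓ ^ m)),
      AddSubgroup.zmultiples ((u : ZMod (ℓ ^ m)) • v) = AddSubgroup.zmultiples v := by
    intro u v
    apply le_antisymm
    · exact AddSubgroup.zmultiples_le.mpr (key _ _)
    · refine AddSubgroup.zmultiples_le.mpr ?_
      have h2 := key (↑u⁻¹ : ZMod (ℓ ^ m)) ((u : ZMod (ℓ ^ m)) • v)
      rwa [smul_smul, u.inv_mul, one_smul] at h2
  -- diagonal computations
  have hD0 : D.mulVec ![(1 : ZMod (ℓ ^ m)), 0] = lam • ![(1 : ZMod (ℓ ^ m)), 0] := by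
    funext i; fin_cases i <;> simp [hD, Matrix.mulVec_diagonal]
  have hD1 : D.mulVec ![(0 : ZMod (ℓ ^ m)), 1] = mu • ![(0 : ZMod (ℓ ^ m)), 1] := by
    funext i; fin_cases i <;> simp [hD, Matrix.mulVec_diagonal]
  set v0 : Fin 2 → ZMod (ℓ ^ m) := A.mulVec ![1, 0] with hv0
  set v1 : Fin 2 → ZMod (ℓ ^ m) := A.mulVec ![0, 1] with hv1
  have hzsmulM : ∀ (C : Matrix (Fin 2) (Fin 2) (ZMod (ℓ ^ m))) (k : ℤ)
      (w : Fin 2 → ZMod (ℓ ^ m)), C.mulVec (k • w) = k • C.mulVec w := by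
    intro C k w
    simpa [Matrix.mulVecLin_apply] using map_zsmul (Matrix.mulVecLin C).toAddMonoidHom k w
  -- main set identity
  have hsub : {H : AddSubgroup (Fin 2 → ZMod (ℓ ^ m)) |
      (∃ x : Fin 2 → ZMod (ℓ ^ m), addOrderOf x = ℓ ^ m ∧ H = AddSubgroup.zmultiples x) ∧
        ∀ h ∈ H, (A * D * B).mulVec h ∈ H}
      = {AddSubgroup.zmultiples v0, AddSubgroup.zmultiples v1} := by
    ext H
    simp only [Set.mem_setOf_eq, Set.mem_insert_iff, Set.mem_singleton_iff]
    constructor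
    · rintro ⟨⟨x, hx, rfl⟩, hinv⟩
      have hxmem : (A * D * B).mulVec x ∈ AddSubgroup.zmultiples x :=
        hinv x (AddSubgroup.mem_zmultiples x)
      obtain ⟨k, hk⟩ := AddSubgroup.mem_zmultiples_iff.mp hxmem
      set y : Fin 2 → ZMod (ℓ ^ m) := B.mulVec x with hy
      have hxy : x = A.mulVec y := (hABv x).symm
      have hDy : D.mulVec y = ((k : ℤ) : ZMod (ℓ ^ m)) • y := by
        have h1 : B.mulVec ((A * D * B).mulVec x) = D.mulVec y := by
          rw [Matrix.mulVec_mulVec]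
          have hassoc : B * (A * D * B) = D * B := by
            rw [show B * (A * D * B) = (B * A) * (D * B) by simp only [mul_assoc], hBA, one_mul]
          rw [hassoc, ← Matrix.mulVec_mulVec]
        have h2 : B.mulVec (k • x) = k • y := hzsmulM B k x
        rw [← hk, h2] at h1
        rw [← h1, Int.cast_smul_eq_zsmul]
      set c : ZMod (ℓ ^ m) := ((k : ℤ) : ZMod (ℓ ^ m)) with hc
      have hy0 : (lam - c) * y 0 = 0 := by
        have := congrFun hDy 0
        rw [Matrix.mulVec_diagonal] at this
        simp only [Pi.smul_apply, smul_eq_mul, Matrix.cons_val_zero] at this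
        rw [sub_mul, this, sub_self]
      have hy1 : (mu - c) * y 1 = 0 := by
        have := congrFun hDy 1
        rw [Matrix.mulVec_diagonal] at this
        simp only [Pi.smul_apply, smul_eq_mul, Matrix.cons_val_one, Matrix.head_cons,
          Matrix.cons_val_zero] at this
        rw [sub_mul, this, sub_self]
      have hyy : y 0 * y 1 = 0 := by
        have h3 : (lam - mu) * (y 0 * y 1) = 0 := by
          have h4 : (lam - mu) * (y 0 * y 1)
              = ((lam - c) * y 0) * y 1 - ((mu - c) * y 1) * y 0 := by ring
          rw [h4, hy0, hy1, zero_mul, zero_mul, sub_zero]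
        obtain ⟨u, hu⟩ := hunit
        have h5 : (↑u⁻¹ : ZMod (ℓ ^ m)) * ((lam - mu) * (y 0 * y 1))
            = (↑u⁻¹ : ZMod (ℓ ^ m)) * 0 := congrArg _ h3
        rwa [← hu, ← mul_assoc, u.inv_mul, one_mul, mul_zero] at h5
      have hyord : addOrderOf y = ℓ ^ m := by
        rw [hy, horder_map B A hAB x, hx]
      rcases hcoord y hyord with h | h
      · left
        obtain ⟨u, hu⟩ := h
        have hy1z : y 1 = 0 := by
          have h6 : (↑u⁻¹ : ZMod (ℓ ^ m)) * (y 0 * y 1)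
              = (↑u⁻¹ : ZMod (ℓ ^ m)) * 0 := congrArg _ hyy
          rwa [← hu, ← mul_assoc, u.inv_mul, one_mul, mul_zero] at h6
        have hyeq : y = (u : ZMod (ℓ ^ m)) • ![1, 0] := by
          funext i; fin_cases i <;> simp [hu, hy1z]
        rw [hxy, hyeq, Matrix.mulVec_smul, hzm u]
      · right
        obtain ⟨u, hu⟩ := h
        have hy0z : y 0 = 0 := by
          have h6 : (y 0 * y 1) * (↑u⁻¹ : ZMod (ℓ ^ m))
              = 0 * (↑u⁻¹ : ZMod (ℓ ^ m)) := congrArg (· * _) hyy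
          rwa [← hu, mul_assoc, u.mul_inv, mul_one, zero_mul] at h6
        have hyeq : y = (u : ZMod (ℓ ^ m)) • ![0, 1] := by
          funext i; fin_cases i <;> simp [hu, hy0z]
        rw [hxy, hyeq, Matrix.mulVec_smul, hzm u]
    · have hmem : ∀ (w : Fin 2 → ZMod (ℓ ^ m)) (r : ZMod (ℓ ^ m)), D.mulVec w = r • w →
          (∀ h ∈ AddSubgroup.zmultiples (A.mulVec w), (A * D * B).mulVec h ∈
            AddSubgroup.zmultiples (A.mulVec w)) := by
        intro w r hw h hh
        obtain ⟨k, hk⟩ := AddSubgroup.mem_zmultiples_iff.mp hh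
        rw [← hk, hzsmulM]
        refine AddSubgroup.zsmul_mem _ ?_ k
        have heq : (A * D * B).mulVec (A.mulVec w) = r • A.mulVec w := by
          rw [Matrix.mulVec_mulVec, show A * D * B * A = A * D * (B * A) by
            simp only [mul_assoc], hBA, mul_one, ← Matrix.mulVec_mulVec, hw,
            Matrix.mulVec_smul]
        rw [heq]
        exact key r _
      rintro (rfl | rfl)
      · exact ⟨⟨v0, by rw [hv0, horder_map A B hBA, horder _ 0 (by simp)], rfl⟩,
          hmem ![1, 0] lam hD0⟩
      · exact ⟨⟨v1, by rw [hv1, horder_map A B hBA, horder _ 1 (by simp)], rfl⟩,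
          hmem ![0, 1] mu hD1⟩
  have hne : AddSubgroup.zmultiples v0 ≠ AddSubgroup.zmultiples v1 := by
    intro h
    have h0 : v0 ∈ AddSubgroup.zmultiples v1 := h ▸ AddSubgroup.mem_zmultiples v0
    obtain ⟨k, hk⟩ := AddSubgroup.mem_zmultiples_iff.mp h0
    have h2 := congrArg (B.mulVec) hk
    rw [hzsmulM, hv0, hv1, hBAv, hBAv] at h2
    have h1 := congrFun h2 0
    simp at h1
  have hcard : Nat.card {H : AddSubgroup (Fin 2 → ZMod (ℓ ^ m)) //
      H ∈ ({AddSubgroup.zmultiples v0, AddSubgroup.zmultiples v1} :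
        Set (AddSubgroup (Fin 2 → ZMod (ℓ ^ m))))} = 2 := by
    rw [Nat.card_coe_set_eq, Set.ncard_pair hne]
  exact (Nat.card_congr (Equiv.subtypeEquivRight fun H => Set.ext_iff.mp hsub H)).trans hcard
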